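/- For every a > 0 and every λ ≥ 0, ∫₀^∞ (1 − e^{−λy}) ν_a(dy) = f_a(λ); that is, ν_a is the Lévy measure of the Bernstein function f_a. -/

import Mathlib

open MeasureTheory

/-- The homographic family `f_a(x) = x e^a / (1 + x (e^a - 1))`. -/
noncomputable def f (a x : ℝ) : ℝ := x * Real.exp a / (1 + x * (Real.exp a - 1))

/-- The measure `ν_a` on `(0, ∞)` with density
`y ↦ e^a (e^a - 1)⁻² e^(-y/(e^a - 1))` with respect to Lebesgue measure. -/
noncomputable def nu (a : ℝ) : Measure ℝ :=
  (volume.restrict (Set.Ioi (0 : ℝ))).withDensity fun y =>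
    ENNReal.ofReal (Real.exp a / (Real.exp a - 1) ^ 2 * Real.exp (-y / (Real.exp a - 1)))

lemma integral_exp_neg_mul_Ioi' {r : ℝ} (hr : 0 < r) :
    ∫ t in Set.Ioi (0 : ℝ), Real.exp (-(r * t)) = 1 / r := by
  have h := Real.integral_rpow_mul_exp_neg_mul_Ioi (a := 1) one_pos hr
  simp only [sub_self, Real.rpow_zero, one_mul, Real.rpow_one, Real.Gamma_one, mul_one] at h
  exact h

/-- For every `a > 0` and `λ ≥ 0`, `∫₀^∞ (1 - e^(-λ y)) ν_a(dy) = f_a(λ)`: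
`ν_a` is the Lévy measure of the Bernstein function `f_a`. -/
theorem nu_levy_measure_of_f (a : ℝ) (ha : 0 < a) (l : ℝ) (hl : 0 ≤ l) :
    ∫ y, (1 - Real.exp (-l * y)) ∂(nu a) = f a l := by
  have he : 1 < Real.exp a := by
    rw [show (1:ℝ) = Real.exp 0 by simp]; exact Real.exp_lt_exp.2 ha
  set b : ℝ := Real.exp a - 1 with hbdef
  have hb : 0 < b := by simp [hbdef]; linarith
  set c : ℝ := Real.exp a / b ^ 2 with hcdef
  have hcpos : 0 < c := by positivity
  have hgnn : ∀ y : ℝ, 0 ≤ c * Real.exp (-y / b) := fun y => by positivity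
  have hmeas : Measurable fun y : ℝ => (c * Real.exp (-y / b)).toNNReal :=
    (by fun_prop : Measurable fun y : ℝ => c * Real.exp (-y / b)).real_toNNReal
  rw [nu]
  have hd : (fun y : ℝ => ENNReal.ofReal (Real.exp a / (Real.exp a - 1) ^ 2 *
      Real.exp (-y / (Real.exp a - 1)))) =
      fun y : ℝ => ((c * Real.exp (-y / b)).toNNReal : ENNReal) := by
    rfl
  rw [hd, integral_withDensity_eq_integral_smul hmeas]
  have heq : ∀ y : ℝ, (c * Real.exp (-y / b)).toNNReal • (1 - Real.exp (-l * y)) =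
      c * (Real.exp (-(1/b * y)) - Real.exp (-((l + 1/b) * y))) := by
    intro y
    rw [NNReal.smul_def, smul_eq_mul, Real.coe_toNNReal _ (hgnn y)]
    rw [show -y / b = -(1/b * y) by ring]
    rw [show -((l + 1/b) * y) = -(1/b*y) + (-l * y) by ring, Real.exp_add]
    ring
  simp_rw [heq]
  rw [integral_const_mul]
  have h1 : ∫ y in Set.Ioi (0:ℝ), (Real.exp (-(1/b * y)) - Real.exp (-((l + 1/b) * y)))
      = 1/(1/b) - 1/(l + 1/b) := by
    rw [integral_sub]
    · rw [integral_exp_neg_mul_Ioi' (by positivity), integral_exp_neg_mul_Ioi' (by positivity)]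
    · have := exp_neg_integrableOn_Ioi (0:ℝ) (show (0:ℝ) < 1/b by positivity)
      exact this.congr_fun (fun y _ => by ring_nf) measurableSet_Ioi
    · have := exp_neg_integrableOn_Ioi (0:ℝ) (show (0:ℝ) < l + 1/b by positivity)
      exact this.congr_fun (fun y _ => by ring_nf) measurableSet_Ioi
  rw [h1, f, hcdef]
  have hb0 : b ≠ 0 := ne_of_gt hb
  have hden : l + 1/b ≠ 0 := by positivity
  have hden2 : 1 + l * b ≠ 0 := by positivity
  rw [← hbdef]
  field_simp
  ring
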